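/- (Dual Gibbs variational formula) For any α > 0, any function φ : X → ℝ, and any probability distribution p on a finite set X: (1/α) ln E_p[e^{αφ(X)}] = sup over probability distributions q ≪ p of [E_q[φ(X)] − (1/α) D_KL(q‖p)], with the supremum attained at q*(x) = p(x)e^{αφ(x)} / ∑_y p(y)e^{αφ(y)}. -/

import Mathlib

open Filter Topology

/-- **dual Gibbs variational formula.** For any `α > 0`, any `φ : X → ℝ` and
any probability distribution `p` on a finite set `X`,
`(1/α) ln E_p[e^{αφ}]` is the greatest value of `E_q[φ] − (1/α) D_KL(q‖p)` over probability
distributions `q ≪ p`, and the supremum is attained at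
`q* x = p x e^{αφ x} / ∑_y p y e^{αφ y}`. -/
theorem statement8 {X : Type*} [Fintype X] [Nonempty X]
    (p : X → ℝ) (hp0 : ∀ x, 0 ≤ p x) (hp1 : ∑ x, p x = 1)
    (α : ℝ) (hα : 0 < α) (φ : X → ℝ) :
    IsGreatest
        {v : ℝ | ∃ q : X → ℝ, (∀ x, 0 ≤ q x) ∧ (∑ x, q x = 1) ∧
          (∀ x, p x = 0 → q x = 0) ∧
          v = (∑ x, q x * φ x) - (1 / α) * ∑ x, q x * Real.log (q x / p x)}
        ((1 / α) * Real.log (∑ x, p x * Real.exp (α * φ x))) ∧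
    ((∑ x, (p x * Real.exp (α * φ x) / ∑ y, p y * Real.exp (α * φ y)) * φ x) -
        (1 / α) * ∑ x, (p x * Real.exp (α * φ x) / ∑ y, p y * Real.exp (α * φ y)) *
          Real.log ((p x * Real.exp (α * φ x) / ∑ y, p y * Real.exp (α * φ y)) / p x)) =
      (1 / α) * Real.log (∑ x, p x * Real.exp (α * φ x)) := by
  have hαne : α ≠ 0 := ne_of_gt hα
  set Z := ∑ y, p y * Real.exp (α * φ y) with hZ
  have hZpos : 0 < Z := by
    obtain ⟨x, hx⟩ : ∃ x, 0 < p x := by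
      by_contra h
      push_neg at h
      have : ∑ x, p x = 0 :=
        Finset.sum_eq_zero (fun x _ => le_antisymm (h x) (hp0 x))
      rw [this] at hp1; norm_num at hp1
    exact Finset.sum_pos' (fun y _ => mul_nonneg (hp0 y) (Real.exp_pos _).le)
      ⟨x, Finset.mem_univ x, mul_pos hx (Real.exp_pos _)⟩
  have hZne : Z ≠ 0 := ne_of_gt hZpos
  have hsum1 : ∑ x, p x * Real.exp (α * φ x) / Z = 1 := by
    rw [← Finset.sum_div, ← hZ, div_self hZne]
  -- equality at q*
  have key : ((∑ x, (p x * Real.exp (α * φ x) / Z) * φ x) -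
      (1 / α) * ∑ x, (p x * Real.exp (α * φ x) / Z) *
        Real.log ((p x * Real.exp (α * φ x) / Z) / p x)) = (1 / α) * Real.log Z := by
    have hterm : ∀ x ∈ Finset.univ,
        (p x * Real.exp (α * φ x) / Z) * Real.log ((p x * Real.exp (α * φ x) / Z) / p x)
        = (p x * Real.exp (α * φ x) / Z) * (α * φ x - Real.log Z) := by
      intro x _
      rcases eq_or_lt_of_le (hp0 x) with h | h
      · rw [← h]; simp
      · have hpne : p x ≠ 0 := ne_of_gt h
        have h1 : (p x * Real.exp (α * φ x) / Z) / p x = Real.exp (α * φ x) / Z := by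
          field_simp
        rw [h1, Real.log_div (Real.exp_ne_zero _) hZne, Real.log_exp]
    rw [Finset.sum_congr rfl hterm]
    have h2 : ∑ x, (p x * Real.exp (α * φ x) / Z) * (α * φ x - Real.log Z)
        = α * (∑ x, (p x * Real.exp (α * φ x) / Z) * φ x) - Real.log Z := by
      rw [Finset.mul_sum]
      rw [show (∑ x, (p x * Real.exp (α * φ x) / Z) * (α * φ x - Real.log Z))
        = (∑ x, (α * ((p x * Real.exp (α * φ x) / Z) * φ x)
            - (p x * Real.exp (α * φ x) / Z) * Real.log Z)) from
        Finset.sum_congr rfl (fun x _ => by ring)]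
      rw [Finset.sum_sub_distrib, ← Finset.sum_mul, hsum1, one_mul]
    rw [h2]
    field_simp
    ring
  refine ⟨⟨⟨fun x => p x * Real.exp (α * φ x) / Z,
      fun x => div_nonneg (mul_nonneg (hp0 x) (Real.exp_pos _).le) hZpos.le,
      hsum1, fun x hx => by simp [hx], key.symm⟩, ?_⟩, key⟩
  rintro v ⟨q, hq0, hq1, hq3, rfl⟩
  set S := ∑ x, q x * φ x with hS
  set T := ∑ x, q x * Real.log (q x / p x) with hT
  have key2 : ∀ x ∈ Finset.univ,
      q x * (α * φ x) - q x * Real.log (q x / p x)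
        ≤ p x * Real.exp (α * φ x) / Z - q x + q x * Real.log Z := by
    intro x _
    rcases eq_or_lt_of_le (hq0 x) with h | h
    · rw [← h]; simp
      exact div_nonneg (mul_nonneg (hp0 x) (Real.exp_pos _).le) hZpos.le
    · have hpx : 0 < p x := by
        rcases eq_or_lt_of_le (hp0 x) with h' | h'
        · exact absurd (hq3 x h'.symm) (ne_of_gt h)
        · exact h'
      have hrpos : 0 < p x * Real.exp (α * φ x) := mul_pos hpx (Real.exp_pos _)
      have hlog : Real.log (p x * Real.exp (α * φ x) / (q x * Z))
          ≤ p x * Real.exp (α * φ x) / (q x * Z) - 1 :=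
        Real.log_le_sub_one_of_pos (div_pos hrpos (mul_pos h hZpos))
      have hrw : α * φ x - Real.log (q x / p x)
          = Real.log (p x * Real.exp (α * φ x) / (q x * Z)) + Real.log Z := by
        rw [Real.log_div hrpos.ne' (mul_pos h hZpos).ne', Real.log_div (ne_of_gt h) hpx.ne',
          Real.log_mul (ne_of_gt h) hZne, Real.log_mul hpx.ne' (Real.exp_ne_zero _),
          Real.log_exp]
        ring
      calc q x * (α * φ x) - q x * Real.log (q x / p x)
          = q x * (α * φ x - Real.log (q x / p x)) := by ring
        _ = q x * (Real.log (p x * Real.exp (α * φ x) / (q x * Z)) + Real.log Z) := by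
            rw [hrw]
        _ ≤ q x * ((p x * Real.exp (α * φ x) / (q x * Z) - 1) + Real.log Z) :=
            mul_le_mul_of_nonneg_left (add_le_add_left hlog _) (hq0 x)
        _ = p x * Real.exp (α * φ x) / Z - q x + q x * Real.log Z := by
            field_simp
  have hsum := Finset.sum_le_sum key2
  have hL : ∑ x, (q x * (α * φ x) - q x * Real.log (q x / p x)) = α * S - T := by
    rw [show (∑ x, (q x * (α * φ x) - q x * Real.log (q x / p x)))
        = (∑ x, (α * (q x * φ x) - q x * Real.log (q x / p x))) from
      Finset.sum_congr rfl (fun x _ => by ring)]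
    rw [Finset.sum_sub_distrib, ← Finset.mul_sum, hS, hT]
  have hR : ∑ x, (p x * Real.exp (α * φ x) / Z - q x + q x * Real.log Z)
      = Real.log Z := by
    rw [Finset.sum_add_distrib, Finset.sum_sub_distrib, hsum1, hq1, ← Finset.sum_mul,
      hq1, one_mul]
    ring
  rw [hL, hR] at hsum
  have hfin : S - 1 / α * T = (1 / α) * (α * S - T) := by field_simp
  have h1α : (0:ℝ) ≤ 1 / α := by positivity
  have h2 := mul_le_mul_of_nonneg_left hsum h1α
  show S - 1 / α * T ≤ 1 / α * Real.log Z
  linarith
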